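/- Let n ≥ 2, let α = (α_{ij}) be real parameters indexed by wedges with α_{ij} ≥ 0 for all wedges, and h = (h_i) arbitrary real parameters indexed by edges. Then for any subsets Λ ⊆ A ⊆ B ⊆ E_n, the expectation of x_Λ := Π_{i∈Λ} x_i is monotone in the volume: E_{A;α,h}(x_Λ) ≤ E_{B;α,h}(x_Λ). -/

import Mathlib

open Finset

/-- Edges of the complete graph on `n` labeled vertices. -/
def Edge (n : ℕ) : Type := {e : Sym2 (Fin n) // ¬ e.IsDiag}

instance (n : ℕ) : Fintype (Edge n) := by unfold Edge; infer_instance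
instance (n : ℕ) : DecidableEq (Edge n) := by unfold Edge; infer_instance

/-- Two distinct edges are neighbors (they form a wedge) when they share a vertex. -/
def EdgeAdj {n : ℕ} (i j : Edge n) : Prop := i ≠ j ∧ ∃ v, v ∈ i.1 ∧ v ∈ j.1

instance {n : ℕ} (i j : Edge n) : Decidable (EdgeAdj i j) := by
  unfold EdgeAdj; infer_instance

/-- Hamiltonian `H_{n;α,h}(x) = (1/n) Σ_{{i,j} ∈ W_n} α_{ij} x_i x_j + Σ_i h_i x_i`,
where the sum over unordered wedges of the symmetric collection `α` is written as
half of the sum over ordered adjacent pairs. -/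
noncomputable def Ham (n : ℕ) (α : Edge n → Edge n → ℝ) (h : Edge n → ℝ)
    (x : Edge n → Fin 2) : ℝ :=
  (1 / (2 * (n : ℝ))) * ∑ i : Edge n, ∑ j : Edge n,
      (if EdgeAdj i j then α i j * ((x i : ℕ) : ℝ) * ((x j : ℕ) : ℝ) else 0)
    + ∑ i : Edge n, h i * ((x i : ℕ) : ℝ)

/-- Partition function. -/
noncomputable def Zpart (n : ℕ) (α : Edge n → Edge n → ℝ) (h : Edge n → ℝ) : ℝ :=
  ∑ x : Edge n → Fin 2, Real.exp (Ham n α h x)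

/-- Gibbs measure. -/
noncomputable def gibbs (n : ℕ) (α : Edge n → Edge n → ℝ) (h : Edge n → ℝ)
    (x : Edge n → Fin 2) : ℝ :=
  Real.exp (Ham n α h x) / Zpart n α h

/-- Expectation with respect to the Gibbs measure. -/
noncomputable def expect (n : ℕ) (α : Edge n → Edge n → ℝ) (h : Edge n → ℝ)
    (f : (Edge n → Fin 2) → ℝ) : ℝ :=
  ∑ x : Edge n → Fin 2, f x * gibbs n α h x

/-- `x_C = Π_{i ∈ C} x_i`. -/
def prodOn {n : ℕ} (C : Finset (Edge n)) (x : Edge n → Fin 2) : ℝ :=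
  ∏ i ∈ C, ((x i : ℕ) : ℝ)

/-- Restricted Hamiltonian on a subset `A` of edges. -/
noncomputable def HamR (n : ℕ) (A : Finset (Edge n)) (α : Edge n → Edge n → ℝ)
    (h : Edge n → ℝ) (x : Edge n → Fin 2) : ℝ :=
  (1 / (2 * (n : ℝ))) * ∑ i ∈ A, ∑ j ∈ A,
      (if EdgeAdj i j then α i j * ((x i : ℕ) : ℝ) * ((x j : ℕ) : ℝ) else 0)
    + ∑ i ∈ A, h i * ((x i : ℕ) : ℝ)

/-- The copy of `{0,1}^A` inside `{0,1}^{E_n}`: configurations vanishing outside `A`. -/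
def confR (n : ℕ) (A : Finset (Edge n)) : Finset (Edge n → Fin 2) :=
  Finset.univ.filter (fun x => ∀ i ∉ A, x i = 0)

/-- Restricted partition function `Z_{A;α,h}`. -/
noncomputable def ZR (n : ℕ) (A : Finset (Edge n)) (α : Edge n → Edge n → ℝ)
    (h : Edge n → ℝ) : ℝ :=
  ∑ x ∈ confR n A, Real.exp (HamR n A α h x)

/-- Restricted expectation `E_{A;α,h}`. -/
noncomputable def expectR (n : ℕ) (A : Finset (Edge n)) (α : Edge n → Edge n → ℝ)
    (h : Edge n → ℝ) (f : (Edge n → Fin 2) → ℝ) : ℝ :=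
  (∑ x ∈ confR n A, f x * Real.exp (HamR n A α h x)) / ZR n A α h


section Auxiliary

lemma fin2_inf_sup_add (p q : Fin 2) :
    ((p ⊓ q : Fin 2) : ℕ) + ((p ⊔ q : Fin 2) : ℕ) = (p : ℕ) + (q : ℕ) := by
  fin_cases p <;> fin_cases q <;> rfl

lemma fin2_supermul (p q r s : Fin 2) :
    (p : ℕ) * (r : ℕ) + (q : ℕ) * (s : ℕ) ≤
      ((p ⊓ q : Fin 2) : ℕ) * ((r ⊓ s : Fin 2) : ℕ) +
        ((p ⊔ q : Fin 2) : ℕ) * ((r ⊔ s : Fin 2) : ℕ) := by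
  fin_cases p <;> fin_cases q <;> fin_cases r <;> fin_cases s <;> simp

/-- Supermodularity of the restricted Hamiltonian. -/
lemma hamR_supermod (n : ℕ) (A : Finset (Edge n)) (α : Edge n → Edge n → ℝ)
    (h : Edge n → ℝ) (hα : ∀ i j, EdgeAdj i j → 0 ≤ α i j) (a b : Edge n → Fin 2) :
    HamR n A α h a + HamR n A α h b ≤
      HamR n A α h (a ⊓ b) + HamR n A α h (a ⊔ b) := by
  have hc : (0:ℝ) ≤ 1 / (2 * (n:ℝ)) := by positivity
  unfold HamR
  have hQ : (∑ i ∈ A, ∑ j ∈ A,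
        (if EdgeAdj i j then α i j * ((a i : ℕ) : ℝ) * ((a j : ℕ) : ℝ) else 0)) +
      (∑ i ∈ A, ∑ j ∈ A,
        (if EdgeAdj i j then α i j * ((b i : ℕ) : ℝ) * ((b j : ℕ) : ℝ) else 0)) ≤
      (∑ i ∈ A, ∑ j ∈ A,
        (if EdgeAdj i j then α i j * (((a ⊓ b) i : ℕ) : ℝ) * (((a ⊓ b) j : ℕ) : ℝ) else 0)) +
      (∑ i ∈ A, ∑ j ∈ A,
        (if EdgeAdj i j then α i j * (((a ⊔ b) i : ℕ) : ℝ) * (((a ⊔ b) j : ℕ) : ℝ) else 0)) := by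
    rw [← Finset.sum_add_distrib, ← Finset.sum_add_distrib]
    refine Finset.sum_le_sum fun i _ => ?_
    rw [← Finset.sum_add_distrib, ← Finset.sum_add_distrib]
    refine Finset.sum_le_sum fun j _ => ?_
    by_cases hij : EdgeAdj i j
    · simp only [hij, if_true, Pi.inf_apply, Pi.sup_apply]
      have key := fin2_supermul (a i) (b i) (a j) (b j)
      have key' : ((a i : ℕ) : ℝ) * ((a j : ℕ) : ℝ) + ((b i : ℕ) : ℝ) * ((b j : ℕ) : ℝ) ≤
          (((a i ⊓ b i : Fin 2) : ℕ) : ℝ) * (((a j ⊓ b j : Fin 2) : ℕ) : ℝ) +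
            (((a i ⊔ b i : Fin 2) : ℕ) : ℝ) * (((a j ⊔ b j : Fin 2) : ℕ) : ℝ) := by
        exact_mod_cast key
      nlinarith [hα i j hij]
    · simp [hij]
  have hL : ∀ i : Edge n,
      h i * (((a ⊓ b) i : ℕ) : ℝ) + h i * (((a ⊔ b) i : ℕ) : ℝ) =
        h i * ((a i : ℕ) : ℝ) + h i * ((b i : ℕ) : ℝ) := by
    intro i
    have key : (((a i ⊓ b i : Fin 2) : ℕ) : ℝ) + (((a i ⊔ b i : Fin 2) : ℕ) : ℝ) =
        ((a i : ℕ) : ℝ) + ((b i : ℕ) : ℝ) := by exact_mod_cast fin2_inf_sup_add (a i) (b i)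
    simp only [Pi.inf_apply, Pi.sup_apply]
    rw [← mul_add, ← mul_add, key]
  have hLsum : (∑ i ∈ A, h i * (((a ⊓ b) i : ℕ) : ℝ)) + (∑ i ∈ A, h i * (((a ⊔ b) i : ℕ) : ℝ)) =
      (∑ i ∈ A, h i * ((a i : ℕ) : ℝ)) + (∑ i ∈ A, h i * ((b i : ℕ) : ℝ)) := by
    rw [← Finset.sum_add_distrib, ← Finset.sum_add_distrib]
    exact Finset.sum_congr rfl fun i _ => hL i
  nlinarith [mul_le_mul_of_nonneg_left hQ hc]

/-- `confR n A` is closed under pointwise `⊓` and `⊔`. -/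
lemma confR_inf_mem {n : ℕ} {A : Finset (Edge n)} {a b : Edge n → Fin 2}
    (ha : a ∈ confR n A) (hb : b ∈ confR n A) :
    a ⊓ b ∈ confR n A ∧ a ⊔ b ∈ confR n A := by
  simp only [confR, Finset.mem_filter, Finset.mem_univ, true_and] at *
  constructor <;> intro i hi <;>
    simp [Pi.inf_apply, Pi.sup_apply, ha i hi, hb i hi]

lemma prodOn_nonneg {n : ℕ} (Λ : Finset (Edge n)) (x : Edge n → Fin 2) :
    0 ≤ prodOn Λ x := by
  unfold prodOn; positivity

lemma prodOn_mono {n : ℕ} (Λ : Finset (Edge n)) : Monotone (prodOn Λ) := by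
  intro a b hab
  unfold prodOn
  refine Finset.prod_le_prod (fun i _ => by positivity) fun i _ => ?_
  exact_mod_cast hab i

/-- FKG inequality specialized to the restricted Gibbs weight. -/
lemma fkg_confR (n : ℕ) (A : Finset (Edge n)) (α : Edge n → Edge n → ℝ)
    (h : Edge n → ℝ) (hα : ∀ i j, EdgeAdj i j → 0 ≤ α i j)
    (f g : (Edge n → Fin 2) → ℝ)
    (hf0 : ∀ x, 0 ≤ f x) (hg0 : ∀ x, 0 ≤ g x) (hf : Monotone f) (hg : Monotone g) :
    (∑ x ∈ confR n A, f x * Real.exp (HamR n A α h x)) *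
        (∑ x ∈ confR n A, g x * Real.exp (HamR n A α h x)) ≤
      (∑ x ∈ confR n A, Real.exp (HamR n A α h x)) *
        (∑ x ∈ confR n A, f x * g x * Real.exp (HamR n A α h x)) := by
  classical
  set μ : (Edge n → Fin 2) → ℝ :=
    fun x => if x ∈ confR n A then Real.exp (HamR n A α h x) else 0 with hμdef
  have hμ0 : 0 ≤ μ := by
    intro x; simp only [hμdef]; split_ifs <;> positivity
  have hμsm : ∀ a b, μ a * μ b ≤ μ (a ⊓ b) * μ (a ⊔ b) := by
    intro a b
    by_cases ha : a ∈ confR n A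
    · by_cases hb : b ∈ confR n A
      · obtain ⟨hi, hs⟩ := confR_inf_mem ha hb
        simp only [hμdef, ha, hb, hi, hs, if_true]
        rw [← Real.exp_add, ← Real.exp_add]
        exact Real.exp_le_exp.mpr (hamR_supermod n A α h hα a b)
      · simp only [hμdef, hb, if_false, mul_zero]
        exact mul_nonneg (hμ0 _) (hμ0 _)
    · simp only [hμdef, ha, if_false, zero_mul]
      exact mul_nonneg (hμ0 _) (hμ0 _)
  have key := fkg (f := f) (g := g) (μ := μ) hμ0 (fun x => hf0 x) (fun x => hg0 x) hf hg hμsm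
  have conv : ∀ F : (Edge n → Fin 2) → ℝ,
      (∑ a, μ a * F a) = ∑ x ∈ confR n A, F x * Real.exp (HamR n A α h x) := by
    intro F
    have he : ∀ a : Edge n → Fin 2,
        μ a * F a = if a ∈ confR n A then F a * Real.exp (HamR n A α h a) else 0 := by
      intro a; simp only [hμdef]; split_ifs <;> ring
    simp only [he]
    rw [Finset.sum_ite_mem, Finset.univ_inter]
  have h3 : (∑ a, μ a) = ∑ x ∈ confR n A, Real.exp (HamR n A α h x) := by
    simp only [hμdef]
    rw [Finset.sum_ite_mem, Finset.univ_inter]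
  have h1 := conv f
  have h2 := conv g
  have h4 := conv (fun x => f x * g x)
  rw [← h1, ← h2, ← h3, ← h4]
  exact key

lemma confR_mem_iff {n : ℕ} {A : Finset (Edge n)} {x : Edge n → Fin 2} :
    x ∈ confR n A ↔ ∀ i ∉ A, x i = 0 := by
  simp [confR]

lemma confR_nonempty {n : ℕ} (A : Finset (Edge n)) : (confR n A).Nonempty :=
  ⟨fun _ => 0, by simp [confR]⟩

lemma sum_confR_insert {n : ℕ} {A : Finset (Edge n)} {k : Edge n} (hk : k ∉ A)
    (F : (Edge n → Fin 2) → ℝ) :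
    ∑ x ∈ confR n (insert k A), F x =
      (∑ x ∈ confR n A, F x) + ∑ x ∈ confR n A, F (Function.update x k 1) := by
  classical
  rw [← Finset.sum_filter_add_sum_filter_not (confR n (insert k A)) (fun x => x k = 0)]
  congr 1
  · apply Finset.sum_congr _ (fun _ _ => rfl)
    ext x
    simp only [Finset.mem_filter, confR_mem_iff, Finset.mem_insert]
    constructor
    · rintro ⟨h1, h2⟩ i hi
      by_cases hik : i = k
      · subst hik; exact h2
      · exact h1 i (by simp [hik, hi])
    · intro hx
      exact ⟨fun i hi => hx i (fun h' => hi (Or.inr h')), hx k hk⟩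
  · refine (Finset.sum_nbij' (fun x => Function.update x k 1)
      (fun y => Function.update y k 0) ?_ ?_ ?_ ?_ (fun a _ => rfl)).symm
    · intro x hx
      rw [confR_mem_iff] at hx
      simp only [Finset.mem_filter, confR_mem_iff, Finset.mem_insert]
      refine ⟨fun i hi => ?_, ?_⟩
      · push_neg at hi
        show Function.update x k 1 i = 0
        rw [Function.update_of_ne hi.1]
        exact hx i hi.2
      · simp [Function.update_self]
    · intro y hy
      simp only [Finset.mem_filter, confR_mem_iff, Finset.mem_insert] at hy
      rw [confR_mem_iff]
      intro i hi
      by_cases hik : i = k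
      · subst hik; simp [Function.update_self]
      · show Function.update y k 0 i = 0
        rw [Function.update_of_ne hik]
        exact hy.1 i (by simp [hik, hi])
    · intro x hx
      rw [confR_mem_iff] at hx
      have hxk : x k = 0 := hx k hk
      show Function.update (Function.update x k 1) k 0 = x
      rw [Function.update_idem, ← hxk, Function.update_eq_self]
    · intro y hy
      simp only [Finset.mem_filter] at hy
      have h2 := hy.2
      have hyk : y k = 1 := by omega
      show Function.update (Function.update y k 0) k 1 = y
      rw [Function.update_idem, ← hyk, Function.update_eq_self]

lemma sum_sq_insert {ι : Type*} [DecidableEq ι] {s : Finset ι} {k : ι} (hk : k ∉ s)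
    (T : ι → ι → ℝ) :
    ∑ i ∈ insert k s, ∑ j ∈ insert k s, T i j =
      T k k + (∑ j ∈ s, T k j) + (∑ i ∈ s, T i k) + ∑ i ∈ s, ∑ j ∈ s, T i j := by
  rw [Finset.sum_insert hk]
  have e : ∀ i, ∑ j ∈ insert k s, T i j = T i k + ∑ j ∈ s, T i j :=
    fun i => Finset.sum_insert hk
  simp only [e]
  rw [Finset.sum_add_distrib]
  ring

/-- For a configuration vanishing at `k ∉ A`, the Hamiltonian on `insert k A` agrees
with the one on `A`. -/
lemma hamR_insert_zero {n : ℕ} {A : Finset (Edge n)} {k : Edge n} (hk : k ∉ A)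
    (α : Edge n → Edge n → ℝ) (h : Edge n → ℝ) {x : Edge n → Fin 2}
    (hx : x ∈ confR n A) :
    HamR n (insert k A) α h x = HamR n A α h x := by
  have hxk : ((x k : ℕ) : ℝ) = 0 := by
    rw [confR_mem_iff] at hx
    rw [hx k hk]; simp
  unfold HamR
  rw [sum_sq_insert hk, Finset.sum_insert hk]
  have e0 : (if EdgeAdj k k then α k k * ((x k : ℕ) : ℝ) * ((x k : ℕ) : ℝ) else 0) = 0 := by
    split_ifs <;> simp [hxk]
  have e1 : ∑ j ∈ A, (if EdgeAdj k j then α k j * ((x k : ℕ) : ℝ) * ((x j : ℕ) : ℝ) else 0)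
      = 0 := Finset.sum_eq_zero fun j _ => by split_ifs <;> simp [hxk]
  have e2 : ∑ i ∈ A, (if EdgeAdj i k then α i k * ((x i : ℕ) : ℝ) * ((x k : ℕ) : ℝ) else 0)
      = 0 := Finset.sum_eq_zero fun i _ => by split_ifs <;> simp [hxk]
  rw [e0, e1, e2, hxk]
  ring

lemma edgeAdj_symm {n : ℕ} {i j : Edge n} (hij : EdgeAdj i j) : EdgeAdj j i := by
  obtain ⟨hne, v, hv1, hv2⟩ := hij
  exact ⟨hne.symm, v, hv2, hv1⟩

/-- The single-site "field" created by opening edge `k`. -/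
noncomputable def Gk {n : ℕ} (A : Finset (Edge n)) (k : Edge n)
    (α : Edge n → Edge n → ℝ) (h : Edge n → ℝ) (x : Edge n → Fin 2) : ℝ :=
  (1 / (2 * (n : ℝ))) *
      (2 * ∑ j ∈ A, (if EdgeAdj k j then α k j * ((x j : ℕ) : ℝ) else 0)) + h k

lemma hamR_insert_one {n : ℕ} {A : Finset (Edge n)} {k : Edge n} (hk : k ∉ A)
    (α : Edge n → Edge n → ℝ) (h : Edge n → ℝ)
    (hsym : ∀ i j, α i j = α j i) (x : Edge n → Fin 2) :
    HamR n (insert k A) α h (Function.update x k 1) =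
      HamR n A α h x + Gk A k α h x := by
  classical
  set y := Function.update x k 1 with hy
  have hyk : ((y k : ℕ) : ℝ) = 1 := by simp [hy, Function.update_self]
  have hyA : ∀ j ∈ A, y j = x j := by
    intro j hj
    exact Function.update_of_ne (by rintro rfl; exact hk hj) _ _
  have hkk : ¬ EdgeAdj k k := fun hadj => hadj.1 rfl
  unfold HamR Gk
  rw [sum_sq_insert hk, Finset.sum_insert hk]
  have e0 : (if EdgeAdj k k then α k k * ((y k : ℕ) : ℝ) * ((y k : ℕ) : ℝ) else 0) = 0 := by
    rw [if_neg hkk]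
  have e1 : ∑ j ∈ A, (if EdgeAdj k j then α k j * ((y k : ℕ) : ℝ) * ((y j : ℕ) : ℝ) else 0) =
      ∑ j ∈ A, (if EdgeAdj k j then α k j * ((x j : ℕ) : ℝ) else 0) := by
    refine Finset.sum_congr rfl fun j hj => ?_
    rw [hyA j hj]
    split_ifs <;> simp [hyk]
  have e2 : ∑ i ∈ A, (if EdgeAdj i k then α i k * ((y i : ℕ) : ℝ) * ((y k : ℕ) : ℝ) else 0) =
      ∑ j ∈ A, (if EdgeAdj k j then α k j * ((x j : ℕ) : ℝ) else 0) := by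
    refine Finset.sum_congr rfl fun i hi => ?_
    rw [hyA i hi]
    by_cases hadj : EdgeAdj i k
    · rw [if_pos hadj, if_pos (edgeAdj_symm hadj), hyk, hsym i k]
      ring
    · rw [if_neg hadj, if_neg (fun hh => hadj (edgeAdj_symm hh))]
  have e3 : ∑ i ∈ A, ∑ j ∈ A,
        (if EdgeAdj i j then α i j * ((y i : ℕ) : ℝ) * ((y j : ℕ) : ℝ) else 0) =
      ∑ i ∈ A, ∑ j ∈ A,
        (if EdgeAdj i j then α i j * ((x i : ℕ) : ℝ) * ((x j : ℕ) : ℝ) else 0) := by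
    refine Finset.sum_congr rfl fun i hi => Finset.sum_congr rfl fun j hj => ?_
    rw [hyA i hi, hyA j hj]
  have e4 : ∑ i ∈ A, h i * ((y i : ℕ) : ℝ) = ∑ i ∈ A, h i * ((x i : ℕ) : ℝ) :=
    Finset.sum_congr rfl fun i hi => by rw [hyA i hi]
  rw [e0, e1, e2, e3, e4, hyk]
  ring

lemma gk_mono {n : ℕ} (A : Finset (Edge n)) (k : Edge n)
    (α : Edge n → Edge n → ℝ) (h : Edge n → ℝ)
    (hα : ∀ i j, EdgeAdj i j → 0 ≤ α i j) : Monotone (Gk A k α h) := by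
  intro a b hab
  unfold Gk
  have hc : (0:ℝ) ≤ 1 / (2 * (n:ℝ)) := by positivity
  have hs : (∑ j ∈ A, (if EdgeAdj k j then α k j * ((a j : ℕ) : ℝ) else 0)) ≤
      ∑ j ∈ A, (if EdgeAdj k j then α k j * ((b j : ℕ) : ℝ) else 0) := by
    refine Finset.sum_le_sum fun j _ => ?_
    split_ifs with hadj
    · refine mul_le_mul_of_nonneg_left ?_ (hα k j hadj)
      exact_mod_cast hab j
    · exact le_rfl
  nlinarith [mul_le_mul_of_nonneg_left hs hc]

set_option maxHeartbeats 2000000 in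
/-- Single step: opening one more edge increases the expectation of `x_Λ`. -/
lemma expectR_le_insert {n : ℕ} (Λ A : Finset (Edge n)) (k : Edge n) (hk : k ∉ A)
    (hΛA : Λ ⊆ A) (α : Edge n → Edge n → ℝ) (h : Edge n → ℝ)
    (hsym : ∀ i j, α i j = α j i) (hα : ∀ i j, EdgeAdj i j → 0 ≤ α i j) :
    expectR n A α h (prodOn Λ) ≤ expectR n (insert k A) α h (prodOn Λ) := by
  classical
  set N0 : ℝ := ∑ x ∈ confR n A, prodOn Λ x * Real.exp (HamR n A α h x) with hN0
  set Z0 : ℝ := ∑ x ∈ confR n A, Real.exp (HamR n A α h x) with hZ0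
  set g : (Edge n → Fin 2) → ℝ := fun x => Real.exp (Gk A k α h x) with hg
  set N1 : ℝ := ∑ x ∈ confR n A, prodOn Λ x * g x * Real.exp (HamR n A α h x) with hN1
  set Z1 : ℝ := ∑ x ∈ confR n A, g x * Real.exp (HamR n A α h x) with hZ1
  have hZ0pos : 0 < Z0 :=
    Finset.sum_pos (fun x _ => Real.exp_pos _) (confR_nonempty A)
  have hZ1pos : 0 < Z1 :=
    Finset.sum_pos (fun x _ => mul_pos (Real.exp_pos _) (Real.exp_pos _)) (confR_nonempty A)
  have hN0nn : 0 ≤ N0 :=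
    Finset.sum_nonneg fun x _ => mul_nonneg (prodOn_nonneg Λ x) (Real.exp_pos _).le
  have hprodupd : ∀ x : Edge n → Fin 2, prodOn Λ (Function.update x k 1) = prodOn Λ x := by
    intro x
    unfold prodOn
    refine Finset.prod_congr rfl fun i hi => ?_
    rw [Function.update_of_ne (by rintro rfl; exact hk (hΛA hi))]
  -- identify the numerator and denominator over `insert k A`
  have hZ : ZR n (insert k A) α h = Z0 + Z1 := by
    rw [ZR, sum_confR_insert hk]
    congr 1
    · exact Finset.sum_congr rfl fun x hx => by rw [hamR_insert_zero hk α h hx]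
    · refine Finset.sum_congr rfl fun x hx => ?_
      rw [hamR_insert_one hk α h hsym x, Real.exp_add]
      ring
  have hNum : (∑ x ∈ confR n (insert k A), prodOn Λ x * Real.exp (HamR n (insert k A) α h x))
      = N0 + N1 := by
    rw [sum_confR_insert hk]
    congr 1
    · exact Finset.sum_congr rfl fun x hx => by rw [hamR_insert_zero hk α h hx]
    · refine Finset.sum_congr rfl fun x hx => ?_
      rw [hamR_insert_one hk α h hsym x, Real.exp_add, hprodupd x]
      ring
  -- FKG gives `N0 * Z1 ≤ Z0 * N1`
  have key : N0 * Z1 ≤ Z0 * N1 := by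
    have := fkg_confR n A α h hα (prodOn Λ) g (prodOn_nonneg Λ)
      (fun x => (Real.exp_pos _).le) (prodOn_mono Λ)
      (fun a b hab => Real.exp_le_exp.mpr (gk_mono A k α h hα hab))
    exact this
  have hZA : ZR n A α h = Z0 := by rw [ZR, hZ0]
  have hNum0 : (∑ x ∈ confR n A, prodOn Λ x * Real.exp (HamR n A α h x)) = N0 := by rw [hN0]
  rw [expectR, expectR, hZ, hNum, hZA, hNum0]
  rw [div_le_div_iff₀ hZ0pos (by linarith)]
  nlinarith

end Auxiliary

/-- Lemma 3.8, monotonicity in the volume: if `α ≥ 0` on wedges, then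
for `Λ ⊆ A ⊆ B ⊆ E_n` one has `E_{A;α,h}(x_Λ) ≤ E_{B;α,h}(x_Λ)`. -/
theorem expect_monotone_volume (n : ℕ) (hn : 2 ≤ n)
    (Λ A B : Finset (Edge n)) (hΛA : Λ ⊆ A) (hAB : A ⊆ B)
    (α : Edge n → Edge n → ℝ) (h : Edge n → ℝ)
    (hsym : ∀ i j, α i j = α j i)
    (hα : ∀ i j, EdgeAdj i j → 0 ≤ α i j) :
    expectR n A α h (prodOn Λ) ≤ expectR n B α h (prodOn Λ) := by
  classical
  have key : ∀ S : Finset (Edge n), Disjoint A S →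
      expectR n A α h (prodOn Λ) ≤ expectR n (A ∪ S) α h (prodOn Λ) := by
    intro S
    induction S using Finset.induction_on with
    | empty => intro _; simp
    | insert k S hkS ih =>
      intro hdisj
      have hdS : Disjoint A S := hdisj.mono_right (Finset.subset_insert k S)
      have hkA : k ∉ A := fun hkA =>
        (Finset.disjoint_left.mp hdisj) hkA (Finset.mem_insert_self k S)
      have hkAS : k ∉ A ∪ S := by simp [hkS, hkA]
      have h1 := ih hdS
      have h2 := expectR_le_insert Λ (A ∪ S) k hkAS
        (hΛA.trans Finset.subset_union_left) α h hsym hα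
      rw [Finset.union_insert]
      exact h1.trans h2
  have hBA : A ∪ (B \ A) = B := Finset.union_sdiff_of_subset hAB
  rw [← hBA]
  exact key (B \ A) Finset.disjoint_sdiff
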